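/- Let R be a localizable partially ordered commutative ring with ℕ ⊆ Loc(R). Then the kernel of the extended Gelfand transformation R → C_≈(D_loc(R)) equals {r ∈ R : there is s ∈ R⁺ such that −s ≤ nr ≤ s for all n ∈ ℕ}. Equivalently, (R⁺)‡ ∩ (−(R⁺))‡ = {r ∈ R : ∃ s ∈ R⁺ with −s ≤ nr ≤ s for all n ∈ ℕ}, where M‡ := {g : ∃ h with kg + h ∈ M for all k ∈ ℕ}. -/

import Mathlib

/-- Algebraic description of the kernel of the extended Gelfand transformation:
`(R⁺)‡ ∩ (−(R⁺)‡) = {r | ∃ s ∈ R⁺, ∀ n ∈ ℕ, −s ≤ nr ≤ s}`. -/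
theorem stmt_18 (R : Type*) [CommRing R] [PartialOrder R]
    [CovariantClass R R (· + ·) (· ≤ ·)]
    (hsq : ∀ r : R, 0 ≤ r ^ 2)
    (hmul : ∀ a b : R, 0 ≤ a → 0 ≤ b → 0 ≤ a * b) :
    ∀ r : R,
      ((∃ h : R, ∀ k : ℕ, 1 ≤ k → 0 ≤ (k : R) * r + h) ∧
        (∃ h : R, ∀ k : ℕ, 1 ≤ k → 0 ≤ (k : R) * (-r) + h)) ↔
      ∃ s : R, 0 ≤ s ∧ ∀ n : ℕ, 1 ≤ n → -s ≤ (n : R) * r ∧ (n : R) * r ≤ s := by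
  intro r
  constructor
  · rintro ⟨⟨e, he⟩, ⟨f, hf⟩⟩
    refine ⟨e + f, ?_, ?_⟩
    · have h1 := he 1 le_rfl
      have h2 := hf 1 le_rfl
      have key : (0 : R) ≤ ((1 : ℕ) * r + e) + ((1 : ℕ) * (-r) + f) := add_nonneg h1 h2
      have heq : (((1 : ℕ) : R) * r + e) + (((1 : ℕ) : R) * (-r) + f) = e + f := by
        push_cast; ring
      rwa [heq] at key
    · intro n hn
      constructor
      · have h1 := he (n + 1) (by omega)
        have h2 := hf 1 le_rfl
        have key : (0 : R) ≤ (((n + 1 : ℕ) : R) * r + e) + (((1 : ℕ) : R) * (-r) + f) :=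
          add_nonneg h1 h2
        have heq : (((n + 1 : ℕ) : R) * r + e) + (((1 : ℕ) : R) * (-r) + f)
            = (n : R) * r + (e + f) := by push_cast; ring
        rw [heq] at key
        rw [neg_le]
        calc -((n : R) * r) = 0 - (n : R) * r := by ring
          _ ≤ ((n : R) * r + (e + f)) - (n : R) * r := sub_le_sub_right key _
          _ = e + f := by ring
      · have h1 := hf (n + 1) (by omega)
        have h2 := he 1 le_rfl
        have key : (0 : R) ≤ (((n + 1 : ℕ) : R) * (-r) + f) + (((1 : ℕ) : R) * r + e) :=
          add_nonneg h1 h2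
        have heq : (((n + 1 : ℕ) : R) * (-r) + f) + (((1 : ℕ) : R) * r + e)
            = (e + f) - (n : R) * r := by push_cast; ring
        rw [heq] at key
        exact sub_nonneg.mp key
  · rintro ⟨s, hs, hb⟩
    refine ⟨⟨s, fun k hk => ?_⟩, ⟨s, fun k hk => ?_⟩⟩
    · have h := add_le_add_right (hb k hk).1 s
      rw [add_comm]; simpa using h
    · have h : (0 : R) ≤ s - (k : R) * r := sub_nonneg.mpr (hb k hk).2
      calc (0 : R) ≤ s - (k : R) * r := h
        _ = (k : R) * (-r) + s := by ring
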